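/- If |M| ≥ 3 and |W| ≥ 3, then no stable two-sides-querying matching rule is OSP-implementable for M (i.e., is implemented by a two-sides-querying mechanism that is OSP for every man); moreover, no stable two-sides-querying matching mechanism is OSP for more than two men. -/

import Mathlib

/-- A preference list over `α` (a totally ordered subset of `α`), represented as a
duplicate-free list, most-preferred member first. Members of `α` not on the list
are unranked (unacceptable). -/
abbrev PrefList (α : Type) : Type := {l : List α // l.Nodup}

/-- `x ≻ y` according to `p`: `x` is ranked above `y` on `p`, or `x` appears on `p`
while `y` does not. -/
def prefers {α : Type} (p : PrefList α) (x y : α) : Prop :=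
  [x, y].Sublist p.val ∨ (x ∈ p.val ∧ y ∉ p.val)

/-- Strict preference over possible outcomes, where `none` means being unmatched:
being matched to someone on one's list is better than being unmatched, which is
better than being matched to someone not on one's list. -/
def outPrefers {α : Type} (p : PrefList α) : Option α → Option α → Prop
  | some x, some y => prefers p x y
  | some x, none => x ∈ p.val
  | none, some y => y ∉ p.val
  | none, none => False

/-- A preference list is full if it ranks every member of the opposite side. -/
def IsFull {α : Type} (p : PrefList α) : Prop := ∀ x : α, x ∈ p.val

/-- A matching between `M` and `W`: a one-to-one mapping between a subset of `M`
and a subset of `W`, recorded as a partial injective function from men to women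
(`μ.toFun m = none` meaning that `m` is unmatched). -/
structure Matching (M W : Type) where
  toFun : M → Option W
  inj : ∀ ⦃m m' : M⦄ ⦃w : W⦄, toFun m = some w → toFun m' = some w → m = m'

/-- Woman `w` strictly prefers man `m` (according to her list `q`) over the partner
matched to her by `μ` (or over remaining unmatched, if `μ` leaves her unmatched). -/
def womanPrefersOver {M W : Type} (q : PrefList M) (μ : Matching M W) (w : W) (m : M) : Prop :=
  (∃ m', μ.toFun m' = some w ∧ prefers q m m') ∨
    ((∀ m', μ.toFun m' ≠ some w) ∧ m ∈ q.val)

/-- `μ` is stable with respect to men's profile `pbar` and women's profile `qbar`: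
there is no man and woman each preferring the other over their match under `μ`, and
no participant is matched with a partner not on their preference list. -/
def IsStable {M W : Type} (pbar : M → PrefList W) (qbar : W → PrefList M)
    (μ : Matching M W) : Prop :=
  ¬ ((∃ m w, outPrefers (pbar m) (some w) (μ.toFun m) ∧ womanPrefersOver (qbar w) μ w m) ∨
     (∃ m w, μ.toFun m = some w ∧ (w ∉ (pbar m).val ∨ m ∉ (qbar w).val)))

/-- `C` is `qbar`-stable: `C pbar` is stable with respect to `pbar` and `qbar` for
every men's profile `pbar`. -/
def IsStableRule {M W : Type} (qbar : W → PrefList M)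
    (C : (M → PrefList W) → Matching M W) : Prop :=
  ∀ pbar, IsStable pbar qbar (C pbar)

/-- `C` is the `M`-optimal stable matching rule `C^qbar`: it maps each men's profile
`pbar` to a stable matching that every man weakly prefers to every stable matching. -/
def IsMOptimalStableRule {M W : Type} (qbar : W → PrefList M)
    (C : (M → PrefList W) → Matching M W) : Prop :=
  ∀ pbar, IsStable pbar qbar (C pbar) ∧
    ∀ μ, IsStable pbar qbar μ → ∀ m, ¬ outPrefers (pbar m) (μ.toFun m) ((C pbar).toFun m)

/-- `C` is strategy-proof for man `m`. -/
def StrategyProofFor {M W : Type} [DecidableEq M]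
    (C : (M → PrefList W) → Matching M W) (m : M) : Prop :=
  ∀ (pbar : M → PrefList W) (p' : PrefList W),
    ¬ outPrefers (pbar m) ((C (Function.update pbar m p')).toFun m) ((C pbar).toFun m)

/-- A women's profile `qbar` is cyclical if there are men `a`, `b`, `c` and women
`x`, `y` with `a ≻ₓ b ≻ₓ c ≻_y a`. -/
def Cyclical {M W : Type} (qbar : W → PrefList M) : Prop :=
  ∃ (a b c : M) (x y : W),
    prefers (qbar x) a b ∧ prefers (qbar x) b c ∧ prefers (qbar y) c a

/-- A one-side-querying extensive-form matching mechanism for `M` over `W`: a rooted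
tree each of whose leaves is labeled by a matching and each of whose internal nodes
queries a man; the edges out of an internal node querying `q` are the fibers of the
function `next` (two preference lists for `q` lie on the same outgoing edge iff they
are routed to the same subtree). -/
inductive Mech (M W : Type) : Type
  | leaf (μ : Matching M W)
  | node (q : M) (next : PrefList W → Mech M W)

/-- The matching rule implemented by a mechanism: route the profile from the root to
a leaf and output that leaf's matching. -/
def Mech.run {M W : Type} : Mech M W → (M → PrefList W) → Matching M W
  | .leaf μ, _ => μ
  | .node q next, pbar => (next (pbar q)).run pbar

/-- Auxiliary definition of obvious strategy-proofness for man `m`: `P` is the set of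
profiles passing through the current node. At each node querying `m`, for all profiles
`pbar`, `pbar'` passing through the node at which `m`'s lists diverge (are routed to
distinct subtrees), the outcome of `pbar'` is not strictly preferred (according to
`pbar m`) to the outcome of `pbar`. -/
def Mech.OSPAux {M W : Type} (m : M) : Mech M W → Set (M → PrefList W) → Prop
  | .leaf _, _ => True
  | .node q next, P =>
      (q = m → ∀ pbar ∈ P, ∀ pbar' ∈ P, next (pbar m) ≠ next (pbar' m) →
        ¬ outPrefers (pbar m) (((next (pbar' m)).run pbar').toFun m)
            (((next (pbar m)).run pbar).toFun m)) ∧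
      ∀ p : PrefList W, Mech.OSPAux m (next p) {pbar ∈ P | next (pbar q) = next p}

/-- `I` is obviously strategy-proof (OSP) for man `m`. -/
def Mech.OSPFor {M W : Type} (I : Mech M W) (m : M) : Prop :=
  Mech.OSPAux m I Set.univ

/-- A matching rule is OSP-implementable if it is implemented by some mechanism that
is OSP for every man. -/
def OSPImplementable {M W : Type} (C : (M → PrefList W) → Matching M W) : Prop :=
  ∃ I : Mech M W, (∀ m : M, I.OSPFor m) ∧ ∀ pbar, I.run pbar = C pbar

/-- A two-sides-querying extensive-form matching mechanism: internal nodes may query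
either a man (about his preference list over `W`) or a woman (about her preference
list over `M`). -/
inductive Mech2 (M W : Type) : Type
  | leaf (μ : Matching M W)
  | nodeM (q : M) (next : PrefList W → Mech2 M W)
  | nodeW (q : W) (next : PrefList M → Mech2 M W)

/-- The two-sides-querying matching rule implemented by a two-sides-querying mechanism. -/
def Mech2.run {M W : Type} :
    Mech2 M W → (M → PrefList W) → (W → PrefList M) → Matching M W
  | .leaf μ, _, _ => μ
  | .nodeM q next, pbar, qbar => (next (pbar q)).run pbar qbar
  | .nodeW q next, pbar, qbar => (next (qbar q)).run pbar qbar

/-- Auxiliary definition of obvious strategy-proofness of a two-sides-querying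
mechanism for man `m`; `P` is the set of two-sided profiles passing through the
current node. -/
def Mech2.OSPAux {M W : Type} (m : M) :
    Mech2 M W → Set ((M → PrefList W) × (W → PrefList M)) → Prop
  | .leaf _, _ => True
  | .nodeM q next, P =>
      (q = m → ∀ r ∈ P, ∀ r' ∈ P, next (r.1 m) ≠ next (r'.1 m) →
        ¬ outPrefers (r.1 m) (((next (r'.1 m)).run r'.1 r'.2).toFun m)
            (((next (r.1 m)).run r.1 r.2).toFun m)) ∧
      ∀ p : PrefList W, Mech2.OSPAux m (next p) {r ∈ P | next (r.1 q) = next p}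
  | .nodeW q next, P =>
      ∀ p : PrefList M, Mech2.OSPAux m (next p) {r ∈ P | next (r.2 q) = next p}

/-- A two-sides-querying mechanism `I` is obviously strategy-proof (OSP) for man `m`. -/
def Mech2.OSPForM {M W : Type} (I : Mech2 M W) (m : M) : Prop :=
  Mech2.OSPAux m I Set.univ
section OSPProof

variable {M W : Type}

private lemma osp_ir {pbar : M → PrefList W} {qbar : W → PrefList M} {μ : Matching M W}
    (h : IsStable pbar qbar μ) {m : M} {w : W} (hm : μ.toFun m = some w) :
    w ∈ (pbar m).val ∧ m ∈ (qbar w).val := by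
  by_contra hc
  refine h (Or.inr ⟨m, w, hm, ?_⟩)
  by_cases h1 : w ∈ (pbar m).val
  · exact Or.inr fun h2 => hc ⟨h1, h2⟩
  · exact Or.inl h1

private lemma osp_noblock {pbar : M → PrefList W} {qbar : W → PrefList M} {μ : Matching M W}
    (h : IsStable pbar qbar μ) {m : M} {w : W}
    (h1 : outPrefers (pbar m) (some w) (μ.toFun m))
    (h2 : womanPrefersOver (qbar w) μ w m) : False :=
  h (Or.inl ⟨m, w, h1, h2⟩)

/-- Pin: if `a`'s list is `[z,u]`, nobody else lists `z`, and `z` ranks `a` last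
but still ranks him (`qbar z = [b,c,a]`), then `a` is matched to `z`. -/
private lemma osp_pinAz {a b c : M} {z u : W}
    {pbar : M → PrefList W} {qbar : W → PrefList M} {μ : Matching M W}
    (hE : ∀ m, m ≠ a → m ≠ b → m ≠ c → (pbar m).val = [])
    (hA : (pbar a).val = [z, u])
    (hzb : z ∉ (pbar b).val) (hzc : z ∉ (pbar c).val)
    (hQz : (qbar z).val = [b, c, a])
    (h : IsStable pbar qbar μ) : μ.toFun a = some z := by
  by_contra hne
  have hzun : ∀ m', μ.toFun m' ≠ some z := by
    intro m' hm'
    have hmem := (osp_ir h hm').1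
    by_cases h1 : m' = a
    · exact hne (h1 ▸ hm')
    by_cases h2 : m' = b
    · exact hzb (h2 ▸ hmem)
    by_cases h3 : m' = c
    · exact hzc (h3 ▸ hmem)
    · rw [hE m' h1 h2 h3] at hmem; simp at hmem
  refine osp_noblock h (m := a) (w := z) ?_ (Or.inr ⟨hzun, by rw [hQz]; simp⟩)
  cases hma : μ.toFun a with
  | none => show z ∈ (pbar a).val; rw [hA]; simp
  | some w' =>
      have hw' := (osp_ir h hma).1
      rw [hA] at hw'
      simp only [List.mem_cons, List.mem_singleton, List.not_mem_nil, or_false] at hw'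
      rcases hw' with rfl | rfl
      · exact absurd hma hne
      · exact Or.inl (by rw [hA])

end OSPProof
section OSPProof2
variable {M W : Type}

private lemma osp_sub2 {α : Type} (u v w : α) : [u, v].Sublist [u, v, w] := by simp
private lemma osp_sub2' {α : Type} (u v w : α) : [v, w].Sublist [u, v, w] :=
  List.sublist_cons_self u [v, w]

/-- Pin for profile ((z,x),(x,y),(x)): `a ↦ z` and `c` unmatched. -/
private lemma osp_pin4 {a b c : M} {x y z : W}
    (hab : a ≠ b) (hac : a ≠ c) (hbc : b ≠ c)
    (hxy : x ≠ y) (hxz : x ≠ z) (hyz : y ≠ z)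
    {pbar : M → PrefList W} {qbar : W → PrefList M} {μ : Matching M W}
    (hE : ∀ m, m ≠ a → m ≠ b → m ≠ c → (pbar m).val = [])
    (hA : (pbar a).val = [z, x]) (hB : (pbar b).val = [x, y]) (hC : (pbar c).val = [x])
    (hQx : (qbar x).val = [a, b, c]) (hQz : (qbar z).val = [b, c, a])
    (h : IsStable pbar qbar μ) : μ.toFun a = some z ∧ μ.toFun c = none := by
  have hzb : z ∉ (pbar b).val := by
    rw [hB]; intro hm; simp at hm
    rcases hm with h' | h'
    · exact hxz h'.symm
    · exact hyz h'.symm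
  have hzc : z ∉ (pbar c).val := by
    rw [hC]; intro hm; simp at hm; exact hxz hm.symm
  have ha : μ.toFun a = some z := osp_pinAz hE hA hzb hzc hQz h
  refine ⟨ha, ?_⟩
  cases hc : μ.toFun c with
  | none => rfl
  | some w' =>
      exfalso
      have hw' := (osp_ir h hc).1
      rw [hC] at hw'; simp at hw'
      rw [hw'] at hc
      -- blocking pair (b, x)
      refine osp_noblock h (m := b) (w := x) ?_
        (Or.inl ⟨c, hc, Or.inl (by rw [hQx]; exact osp_sub2' a b c)⟩)
      cases hmb : μ.toFun b with
      | none => show x ∈ (pbar b).val; rw [hB]; simp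
      | some w2 =>
          have hw2 := (osp_ir h hmb).1
          rw [hB] at hw2; simp at hw2
          rcases hw2 with h' | h'
          · rw [h'] at hmb; exact absurd (μ.inj hmb hc) hbc
          · rw [h']; exact Or.inl (by rw [hB])

/-- Pin for profile ((z,x),(x,y),(z,x)): `a ↦ x`, `b ↦ y`. -/
private lemma osp_pin1 {a b c : M} {x y z : W}
    (hab : a ≠ b) (hac : a ≠ c) (hbc : b ≠ c)
    (hxy : x ≠ y) (hxz : x ≠ z) (hyz : y ≠ z)
    {pbar : M → PrefList W} {qbar : W → PrefList M} {μ : Matching M W}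
    (hE : ∀ m, m ≠ a → m ≠ b → m ≠ c → (pbar m).val = [])
    (hA : (pbar a).val = [z, x]) (hB : (pbar b).val = [x, y]) (hC : (pbar c).val = [z, x])
    (hQx : (qbar x).val = [a, b, c]) (hQy : (qbar y).val = [a, b, c])
    (hQz : (qbar z).val = [b, c, a])
    (h : IsStable pbar qbar μ) : μ.toFun a = some x ∧ μ.toFun b = some y := by
  -- step 1 : a is not matched to z
  have hna : μ.toFun a ≠ some z := by
    intro haz
    refine osp_noblock h (m := c) (w := z) ?_
      (Or.inl ⟨a, haz, Or.inl (by rw [hQz]; exact osp_sub2' b c a)⟩)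
    cases hmc : μ.toFun c with
    | none => show z ∈ (pbar c).val; rw [hC]; simp
    | some w' =>
        have hw' := (osp_ir h hmc).1
        rw [hC] at hw'; simp at hw'
        rcases hw' with h' | h'
        · rw [h'] at hmc; exact absurd (μ.inj hmc haz) (Ne.symm hac)
        · rw [h']; exact Or.inl (by rw [hC])
  -- step 2 : c is matched to z
  have hcz : μ.toFun c = some z := by
    by_contra hnc
    have hzun : ∀ m', μ.toFun m' ≠ some z := by
      intro m' hm'
      have hmem := (osp_ir h hm').1
      by_cases h1 : m' = a
      · exact hna (h1 ▸ hm')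
      by_cases h2 : m' = b
      · rw [h2, hB] at hmem; simp at hmem
        rcases hmem with h' | h'
        · exact hxz h'.symm
        · exact hyz h'.symm
      by_cases h3 : m' = c
      · exact hnc (h3 ▸ hm')
      · rw [hE m' h1 h2 h3] at hmem; simp at hmem
    refine osp_noblock h (m := c) (w := z) ?_ (Or.inr ⟨hzun, by rw [hQz]; simp⟩)
    cases hmc : μ.toFun c with
    | none => show z ∈ (pbar c).val; rw [hC]; simp
    | some w' =>
        have hw' := (osp_ir h hmc).1
        rw [hC] at hw'; simp at hw'
        rcases hw' with h' | h'
        · rw [h'] at hmc; exact absurd hmc hnc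
        · rw [h']; exact Or.inl (by rw [hC])
  -- step 3 : a is matched to x
  have hax : μ.toFun a = some x := by
    by_contra hnx
    have hman : μ.toFun a = none := by
      cases hma : μ.toFun a with
      | none => rfl
      | some w' =>
          exfalso
          have hw' := (osp_ir h hma).1
          rw [hA] at hw'; simp at hw'
          rcases hw' with h' | h'
          · rw [h'] at hma; exact hna hma
          · rw [h'] at hma; exact hnx hma
    refine osp_noblock h (m := a) (w := x) ?_ ?_
    · rw [hman]; show x ∈ (pbar a).val; rw [hA]; simp
    · by_cases hxm : ∃ m', μ.toFun m' = some x
      · rcases hxm with ⟨m', hm'⟩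
        by_cases h1 : m' = a
        · rw [h1, hman] at hm'; exact absurd hm' (by simp)
        by_cases h2 : m' = b
        · rw [h2] at hm'
          exact Or.inl ⟨b, hm', Or.inl (by rw [hQx]; exact osp_sub2 a b c)⟩
        by_cases h3 : m' = c
        · rw [h3, hcz] at hm'
          exact absurd (Option.some.inj hm') (Ne.symm hxz)
        · have := (osp_ir h hm').1; rw [hE m' h1 h2 h3] at this; simp at this
      · push_neg at hxm
        exact Or.inr ⟨hxm, by rw [hQx]; simp⟩
  -- step 4 : b is matched to y
  refine ⟨hax, ?_⟩
  cases hmb : μ.toFun b with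
  | some w' =>
      have hw' := (osp_ir h hmb).1
      rw [hB] at hw'; simp at hw'
      rcases hw' with h' | h'
      · rw [h'] at hmb; exact absurd (μ.inj hmb hax) (Ne.symm hab)
      · rw [h']
  | none =>
      exfalso
      refine osp_noblock h (m := b) (w := y) ?_ ?_
      · rw [hmb]; show y ∈ (pbar b).val; rw [hB]; simp
      · have hyun : ∀ m', μ.toFun m' ≠ some y := by
          intro m' hm'
          by_cases h1 : m' = a
          · rw [h1, hax] at hm'; exact hxy (Option.some.inj hm')
          by_cases h2 : m' = b
          · rw [h2, hmb] at hm'; exact absurd hm' (by simp)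
          by_cases h3 : m' = c
          · rw [h3, hcz] at hm'; exact hyz (Option.some.inj hm').symm
          · have := (osp_ir h hm').1; rw [hE m' h1 h2 h3] at this; simp at this
        exact Or.inr ⟨hyun, by rw [hQy]; simp⟩

end OSPProof2
section OSPProof3
variable {M W : Type}

/-- Pin for profile ((z,y),(y,z),(z,x)): `b ↦ z`, `c ↦ x`. -/
private lemma osp_pin3 {a b c : M} {x y z : W}
    (hab : a ≠ b) (hac : a ≠ c) (hbc : b ≠ c)
    (hxy : x ≠ y) (hxz : x ≠ z) (hyz : y ≠ z)
    {pbar : M → PrefList W} {qbar : W → PrefList M} {μ : Matching M W}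
    (hE : ∀ m, m ≠ a → m ≠ b → m ≠ c → (pbar m).val = [])
    (hA : (pbar a).val = [z, y]) (hB : (pbar b).val = [y, z]) (hC : (pbar c).val = [z, x])
    (hQx : (qbar x).val = [a, b, c]) (hQy : (qbar y).val = [a, b, c])
    (hQz : (qbar z).val = [b, c, a])
    (h : IsStable pbar qbar μ) : μ.toFun b = some z ∧ μ.toFun c = some x := by
  -- step 1 : a is not matched to z
  have hna : μ.toFun a ≠ some z := by
    intro haz
    refine osp_noblock h (m := c) (w := z) ?_
      (Or.inl ⟨a, haz, Or.inl (by rw [hQz]; exact osp_sub2' b c a)⟩)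
    cases hmc : μ.toFun c with
    | none => show z ∈ (pbar c).val; rw [hC]; simp
    | some w' =>
        have hw' := (osp_ir h hmc).1
        rw [hC] at hw'; simp at hw'
        rcases hw' with h' | h'
        · rw [h'] at hmc; exact absurd (μ.inj hmc haz) (Ne.symm hac)
        · rw [h']; exact Or.inl (by rw [hC])
  -- step 2 : c is not matched to z
  have hnc : μ.toFun c ≠ some z := by
    intro hcz
    cases hmb : μ.toFun b with
    | some w' =>
        have hw' := (osp_ir h hmb).1
        rw [hB] at hw'; simp at hw'
        rcases hw' with h' | h'
        · -- b matched to y : blocking pair (a, y)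
          rw [h'] at hmb
          have hman : μ.toFun a = none := by
            cases hma : μ.toFun a with
            | none => rfl
            | some w2 =>
                exfalso
                have hw2 := (osp_ir h hma).1
                rw [hA] at hw2; simp at hw2
                rcases hw2 with h2 | h2
                · rw [h2] at hma; exact hna hma
                · rw [h2] at hma; exact absurd (μ.inj hma hmb) hab
          refine osp_noblock h (m := a) (w := y) ?_
            (Or.inl ⟨b, hmb, Or.inl (by rw [hQy]; exact osp_sub2 a b c)⟩)
          rw [hman]; show y ∈ (pbar a).val; rw [hA]; simp
        · -- b matched to z : impossible, z is taken by c
          rw [h'] at hmb; exact absurd (μ.inj hmb hcz) hbc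
    | none =>
        -- blocking pair (b, z)
        refine osp_noblock h (m := b) (w := z) ?_
          (Or.inl ⟨c, hcz, Or.inl (by rw [hQz]; exact osp_sub2 b c a)⟩)
        rw [hmb]; show z ∈ (pbar b).val; rw [hB]; simp
  -- step 3 : b is matched to z
  have hbz : μ.toFun b = some z := by
    by_contra hnb
    have hzun : ∀ m', μ.toFun m' ≠ some z := by
      intro m' hm'
      by_cases h1 : m' = a
      · exact hna (h1 ▸ hm')
      by_cases h2 : m' = b
      · exact hnb (h2 ▸ hm')
      by_cases h3 : m' = c
      · exact hnc (h3 ▸ hm')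
      · have := (osp_ir h hm').1; rw [hE m' h1 h2 h3] at this; simp at this
    refine osp_noblock h (m := c) (w := z) ?_ (Or.inr ⟨hzun, by rw [hQz]; simp⟩)
    cases hmc : μ.toFun c with
    | none => show z ∈ (pbar c).val; rw [hC]; simp
    | some w' =>
        have hw' := (osp_ir h hmc).1
        rw [hC] at hw'; simp at hw'
        rcases hw' with h' | h'
        · rw [h'] at hmc; exact (hnc hmc).elim
        · rw [h']; exact Or.inl (by rw [hC])
  -- step 4 : c is matched to x
  refine ⟨hbz, ?_⟩
  cases hmc : μ.toFun c with
  | some w' =>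
      have hw' := (osp_ir h hmc).1
      rw [hC] at hw'; simp at hw'
      rcases hw' with h' | h'
      · rw [h'] at hmc; exact absurd hmc hnc
      · rw [h']
  | none =>
      exfalso
      refine osp_noblock h (m := c) (w := x) ?_ ?_
      · rw [hmc]; show x ∈ (pbar c).val; rw [hC]; simp
      · have hxun : ∀ m', μ.toFun m' ≠ some x := by
          intro m' hm'
          by_cases h1 : m' = a
          · rw [h1] at hm'
            have := (osp_ir h hm').1
            rw [hA] at this; simp at this
            rcases this with h' | h'
            · exact hxz h'
            · exact hxy h'
          by_cases h2 : m' = b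
          · rw [h2, hbz] at hm'; exact hxz (Option.some.inj hm').symm
          by_cases h3 : m' = c
          · rw [h3, hmc] at hm'; exact absurd hm' (by simp)
          · have := (osp_ir h hm').1; rw [hE m' h1 h2 h3] at this; simp at this
        exact Or.inr ⟨hxun, by rw [hQx]; simp⟩

end OSPProof3
section OSPProof4
variable {α β : Type}

private noncomputable def mkPbar [DecidableEq α] (a b c : α) (pa pb pc e : PrefList β) :
    α → PrefList β :=
  fun m => if m = a then pa else if m = b then pb else if m = c then pc else e

private lemma mkPbar_a [DecidableEq α] (a b c : α) (pa pb pc e : PrefList β) :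
    mkPbar a b c pa pb pc e a = pa := by simp [mkPbar]

private lemma mkPbar_b [DecidableEq α] {a b : α} (c : α) (pa pb pc e : PrefList β)
    (h : b ≠ a) : mkPbar a b c pa pb pc e b = pb := by simp [mkPbar, h]

private lemma mkPbar_c [DecidableEq α] {a b c : α} (pa pb pc e : PrefList β)
    (h1 : c ≠ a) (h2 : c ≠ b) : mkPbar a b c pa pb pc e c = pc := by simp [mkPbar, h1, h2]

private lemma mkPbar_other [DecidableEq α] {a b c m : α} (pa pb pc e : PrefList β)
    (h1 : m ≠ a) (h2 : m ≠ b) (h3 : m ≠ c) : mkPbar a b c pa pb pc e m = e := by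
  simp [mkPbar, h1, h2, h3]

end OSPProof4
private theorem osp_main {M W : Type} (a b c : M) (x y z : W)
    (hab : a ≠ b) (hac : a ≠ c) (hbc : b ≠ c)
    (hxy : x ≠ y) (hxz : x ≠ z) (hyz : y ≠ z)
    (I : Mech2 M W)
    (hstable : ∀ pbar qbar, IsStable pbar qbar (I.run pbar qbar))
    (hOa : I.OSPForM a) (hOb : I.OSPForM b) (hOc : I.OSPForM c) : False := by
  classical
  obtain ⟨A1, hA1⟩ : ∃ p : PrefList W, p.val = [z, x] :=
    ⟨⟨[z, x], by simp [Ne.symm hxz]⟩, rfl⟩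
  obtain ⟨A2, hA2⟩ : ∃ p : PrefList W, p.val = [z, y] :=
    ⟨⟨[z, y], by simp [Ne.symm hyz]⟩, rfl⟩
  obtain ⟨B1, hB1⟩ : ∃ p : PrefList W, p.val = [x, y] :=
    ⟨⟨[x, y], by simp [hxy]⟩, rfl⟩
  obtain ⟨B2, hB2⟩ : ∃ p : PrefList W, p.val = [y, z] :=
    ⟨⟨[y, z], by simp [hyz]⟩, rfl⟩
  obtain ⟨C1, hC1⟩ : ∃ p : PrefList W, p.val = [x] := ⟨⟨[x], by simp⟩, rfl⟩
  obtain ⟨C2, hC2⟩ : ∃ p : PrefList W, p.val = [z, x] :=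
    ⟨⟨[z, x], by simp [Ne.symm hxz]⟩, rfl⟩
  obtain ⟨E0, hE0⟩ : ∃ p : PrefList W, p.val = [] := ⟨⟨[], by simp⟩, rfl⟩
  obtain ⟨QX, hQX⟩ : ∃ p : PrefList M, p.val = [a, b, c] :=
    ⟨⟨[a, b, c], by simp [hab, hac, hbc]⟩, rfl⟩
  obtain ⟨QY, hQY⟩ : ∃ p : PrefList M, p.val = [a, b, c] :=
    ⟨⟨[a, b, c], by simp [hab, hac, hbc]⟩, rfl⟩
  obtain ⟨QZ, hQZ⟩ : ∃ p : PrefList M, p.val = [b, c, a] :=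
    ⟨⟨[b, c, a], by simp [hbc, Ne.symm hab, Ne.symm hac]⟩, rfl⟩
  obtain ⟨EM, hEM⟩ : ∃ p : PrefList M, p.val = [] := ⟨⟨[], by simp⟩, rfl⟩
  set qb : W → PrefList M := mkPbar x y z QX QY QZ EM with hqb
  -- value facts about qb
  have hqx : (qb x).val = [a, b, c] := by rw [hqb, mkPbar_a]; exact hQX
  have hqy : (qb y).val = [a, b, c] := by rw [hqb, mkPbar_b z _ _ _ _ (Ne.symm hxy)]; exact hQY
  have hqz : (qb z).val = [b, c, a] := by
    rw [hqb, mkPbar_c _ _ _ _ (Ne.symm hxz) (Ne.symm hyz)]; exact hQZ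
  -- generic facts about men's profiles
  have hEf : ∀ (pa pb pc : PrefList W) (m : M), m ≠ a → m ≠ b → m ≠ c →
      ((mkPbar a b c pa pb pc E0 : M → PrefList W) m).val = [] := by
    intro pa pb pc m h1 h2 h3; rw [mkPbar_other _ _ _ _ h1 h2 h3]; exact hE0
  have hAf : ∀ (pa pb pc : PrefList W),
      ((mkPbar a b c pa pb pc E0 : M → PrefList W) a).val = pa.val := by
    intro pa pb pc; rw [mkPbar_a]
  have hBf : ∀ (pa pb pc : PrefList W),
      ((mkPbar a b c pa pb pc E0 : M → PrefList W) b).val = pb.val := by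
    intro pa pb pc; rw [mkPbar_b _ _ _ _ _ (Ne.symm hab)]
  have hCf : ∀ (pa pb pc : PrefList W),
      ((mkPbar a b c pa pb pc E0 : M → PrefList W) c).val = pc.val := by
    intro pa pb pc; rw [mkPbar_c _ _ _ _ (Ne.symm hac) (Ne.symm hbc)]
  -- the key induction
  have key : ∀ (T : Mech2 M W) (P : Set ((M → PrefList W) × (W → PrefList M))),
      Mech2.OSPAux a T P → Mech2.OSPAux b T P → Mech2.OSPAux c T P →
      (∀ pa pb pc : PrefList W, (pa = A1 ∨ pa = A2) → (pb = B1 ∨ pb = B2) →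
        (pc = C1 ∨ pc = C2) →
        ((mkPbar a b c pa pb pc E0, qb) ∈ P ∧
          IsStable (mkPbar a b c pa pb pc E0) qb
            (T.run (mkPbar a b c pa pb pc E0) qb))) →
      False := by
    intro T
    induction T with
    | leaf μ0 =>
        intro P _ _ _ hfam
        have hs1 := (hfam A1 B1 C1 (Or.inl rfl) (Or.inl rfl) (Or.inl rfl)).2
        have hs2 := (hfam A1 B1 C2 (Or.inl rfl) (Or.inl rfl) (Or.inr rfl)).2
        have e1 : μ0.toFun a = some z :=
          (osp_pin4 hab hac hbc hxy hxz hyz (hEf A1 B1 C1)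
            (by rw [hAf]; exact hA1) (by rw [hBf]; exact hB1) (by rw [hCf]; exact hC1)
            hqx hqz hs1).1
        have e2 : μ0.toFun a = some x :=
          (osp_pin1 hab hac hbc hxy hxz hyz (hEf A1 B1 C2)
            (by rw [hAf]; exact hA1) (by rw [hBf]; exact hB1) (by rw [hCf]; exact hC2)
            hqx hqy hqz hs2).1
        rw [e1] at e2
        exact hxz (Option.some.inj e2).symm
    | nodeM q next ih =>
        intro P hOa' hOb' hOc' hfam
        by_cases hqa : q = a
        · rw [hqa] at hOa' hOb' hOc' hfam
          by_cases hsp : next A1 = next A2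
          · refine ih A1 {r ∈ P | next (r.1 a) = next A1}
              (hOa'.2 A1) (hOb'.2 A1) (hOc'.2 A1) ?_
            intro pa pb pc h1 h2 h3
            obtain ⟨hm, hs⟩ := hfam pa pb pc h1 h2 h3
            have hnext : next ((mkPbar a b c pa pb pc E0 : M → PrefList W) a) = next A1 := by
              rw [mkPbar_a _ _ _ _ _ _ _]
              rcases h1 with rfl | rfl
              · rfl
              · exact hsp.symm
            refine ⟨⟨hm, hnext⟩, ?_⟩
            have hsd : IsStable (mkPbar a b c pa pb pc E0) qb
                ((next ((mkPbar a b c pa pb pc E0 : M → PrefList W) a)).run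
                  (mkPbar a b c pa pb pc E0) qb) := hs
            rw [hnext] at hsd
            exact hsd
          · obtain ⟨hm1, hs1⟩ := hfam A1 B1 C2 (Or.inl rfl) (Or.inl rfl) (Or.inr rfl)
            obtain ⟨hm2, hs2⟩ := hfam A2 B1 C1 (Or.inr rfl) (Or.inl rfl) (Or.inl rfl)
            have e1 : (mkPbar a b c A1 B1 C2 E0 : M → PrefList W) a = A1 := mkPbar_a _ _ _ _ _ _ _
            have e2 : (mkPbar a b c A2 B1 C1 E0 : M → PrefList W) a = A2 := mkPbar_a _ _ _ _ _ _ _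
            have hs1d : IsStable (mkPbar a b c A1 B1 C2 E0) qb
                ((next ((mkPbar a b c A1 B1 C2 E0 : M → PrefList W) a)).run (mkPbar a b c A1 B1 C2 E0) qb) := hs1
            have hs2d : IsStable (mkPbar a b c A2 B1 C1 E0) qb
                ((next ((mkPbar a b c A2 B1 C1 E0 : M → PrefList W) a)).run (mkPbar a b c A2 B1 C1 E0) qb) := hs2
            rw [e1] at hs1d
            rw [e2] at hs2d
            have hneq : next ((mkPbar a b c A1 B1 C2 E0, qb).1 a) ≠ next ((mkPbar a b c A2 B1 C1 E0, qb).1 a) := by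
              show next ((mkPbar a b c A1 B1 C2 E0 : M → PrefList W) a) ≠ next ((mkPbar a b c A2 B1 C1 E0 : M → PrefList W) a)
              rw [e1, e2]; exact hsp
            have hviol := hOa'.1 rfl (mkPbar a b c A1 B1 C2 E0, qb) hm1 (mkPbar a b c A2 B1 C1 E0, qb) hm2 hneq
            refine hviol ?_
            show outPrefers ((mkPbar a b c A1 B1 C2 E0 : M → PrefList W) a)
              (((next ((mkPbar a b c A2 B1 C1 E0 : M → PrefList W) a)).run (mkPbar a b c A2 B1 C1 E0) qb).toFun a)
              (((next ((mkPbar a b c A1 B1 C2 E0 : M → PrefList W) a)).run (mkPbar a b c A1 B1 C2 E0) qb).toFun a)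
            rw [e1, e2]
            have pin_t := (osp_pin1 hab hac hbc hxy hxz hyz (hEf A1 B1 C2) (by rw [hAf]; exact hA1) (by rw [hBf]; exact hB1) (by rw [hCf]; exact hC2) hqx hqy hqz hs1d).1
            have pin_s : ((next A2).run (mkPbar a b c A2 B1 C1 E0) qb).toFun a = some z := by
              refine osp_pinAz (hEf A2 B1 C1) (by rw [hAf]; exact hA2) ?_ ?_ hqz hs2d
              · rw [hBf, hB1]; intro hm; simp at hm
                rcases hm with h' | h'
                · exact hxz h'.symm
                · exact hyz h'.symm
              · rw [hCf, hC1]; intro hm; simp at hm; exact hxz hm.symm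
            rw [pin_t, pin_s]
            exact Or.inl (by rw [hA1])
        · by_cases hqb : q = b
          · rw [hqb] at hOa' hOb' hOc' hfam
            by_cases hsp : next B1 = next B2
            · refine ih B1 {r ∈ P | next (r.1 b) = next B1}
                (hOa'.2 B1) (hOb'.2 B1) (hOc'.2 B1) ?_
              intro pa pb pc h1 h2 h3
              obtain ⟨hm, hs⟩ := hfam pa pb pc h1 h2 h3
              have hnext : next ((mkPbar a b c pa pb pc E0 : M → PrefList W) b) = next B1 := by
                rw [mkPbar_b _ _ _ _ _ (Ne.symm hab)]
                rcases h2 with rfl | rfl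
                · rfl
                · exact hsp.symm
              refine ⟨⟨hm, hnext⟩, ?_⟩
              have hsd : IsStable (mkPbar a b c pa pb pc E0) qb
                  ((next ((mkPbar a b c pa pb pc E0 : M → PrefList W) b)).run
                    (mkPbar a b c pa pb pc E0) qb) := hs
              rw [hnext] at hsd
              exact hsd
            · obtain ⟨hm1, hs1⟩ := hfam A2 B2 C2 (Or.inr rfl) (Or.inr rfl) (Or.inr rfl)
              obtain ⟨hm2, hs2⟩ := hfam A1 B1 C2 (Or.inl rfl) (Or.inl rfl) (Or.inr rfl)
              have e1 : (mkPbar a b c A2 B2 C2 E0 : M → PrefList W) b = B2 := mkPbar_b _ _ _ _ _ (Ne.symm hab)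
              have e2 : (mkPbar a b c A1 B1 C2 E0 : M → PrefList W) b = B1 := mkPbar_b _ _ _ _ _ (Ne.symm hab)
              have hs1d : IsStable (mkPbar a b c A2 B2 C2 E0) qb
                  ((next ((mkPbar a b c A2 B2 C2 E0 : M → PrefList W) b)).run (mkPbar a b c A2 B2 C2 E0) qb) := hs1
              have hs2d : IsStable (mkPbar a b c A1 B1 C2 E0) qb
                  ((next ((mkPbar a b c A1 B1 C2 E0 : M → PrefList W) b)).run (mkPbar a b c A1 B1 C2 E0) qb) := hs2
              rw [e1] at hs1d
              rw [e2] at hs2d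
              have hneq : next ((mkPbar a b c A2 B2 C2 E0, qb).1 b) ≠ next ((mkPbar a b c A1 B1 C2 E0, qb).1 b) := by
                show next ((mkPbar a b c A2 B2 C2 E0 : M → PrefList W) b) ≠ next ((mkPbar a b c A1 B1 C2 E0 : M → PrefList W) b)
                rw [e1, e2]; exact Ne.symm hsp
              have hviol := hOb'.1 rfl (mkPbar a b c A2 B2 C2 E0, qb) hm1 (mkPbar a b c A1 B1 C2 E0, qb) hm2 hneq
              refine hviol ?_
              show outPrefers ((mkPbar a b c A2 B2 C2 E0 : M → PrefList W) b)
                (((next ((mkPbar a b c A1 B1 C2 E0 : M → PrefList W) b)).run (mkPbar a b c A1 B1 C2 E0) qb).toFun b)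
                (((next ((mkPbar a b c A2 B2 C2 E0 : M → PrefList W) b)).run (mkPbar a b c A2 B2 C2 E0) qb).toFun b)
              rw [e1, e2]
              have pin_t := (osp_pin3 hab hac hbc hxy hxz hyz (hEf A2 B2 C2) (by rw [hAf]; exact hA2) (by rw [hBf]; exact hB2) (by rw [hCf]; exact hC2) hqx hqy hqz hs1d).1
              have pin_s := (osp_pin1 hab hac hbc hxy hxz hyz (hEf A1 B1 C2) (by rw [hAf]; exact hA1) (by rw [hBf]; exact hB1) (by rw [hCf]; exact hC2) hqx hqy hqz hs2d).2
              rw [pin_t, pin_s]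
              exact Or.inl (by rw [hB2])
          · by_cases hqc : q = c
            · rw [hqc] at hOa' hOb' hOc' hfam
              by_cases hsp : next C1 = next C2
              · refine ih C1 {r ∈ P | next (r.1 c) = next C1}
                  (hOa'.2 C1) (hOb'.2 C1) (hOc'.2 C1) ?_
                intro pa pb pc h1 h2 h3
                obtain ⟨hm, hs⟩ := hfam pa pb pc h1 h2 h3
                have hnext : next ((mkPbar a b c pa pb pc E0 : M → PrefList W) c) = next C1 := by
                  rw [mkPbar_c _ _ _ _ (Ne.symm hac) (Ne.symm hbc)]
                  rcases h3 with rfl | rfl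
                  · rfl
                  · exact hsp.symm
                refine ⟨⟨hm, hnext⟩, ?_⟩
                have hsd : IsStable (mkPbar a b c pa pb pc E0) qb
                    ((next ((mkPbar a b c pa pb pc E0 : M → PrefList W) c)).run
                      (mkPbar a b c pa pb pc E0) qb) := hs
                rw [hnext] at hsd
                exact hsd
              · obtain ⟨hm1, hs1⟩ := hfam A1 B1 C1 (Or.inl rfl) (Or.inl rfl) (Or.inl rfl)
                obtain ⟨hm2, hs2⟩ := hfam A2 B2 C2 (Or.inr rfl) (Or.inr rfl) (Or.inr rfl)
                have e1 : (mkPbar a b c A1 B1 C1 E0 : M → PrefList W) c = C1 := mkPbar_c _ _ _ _ (Ne.symm hac) (Ne.symm hbc)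
                have e2 : (mkPbar a b c A2 B2 C2 E0 : M → PrefList W) c = C2 := mkPbar_c _ _ _ _ (Ne.symm hac) (Ne.symm hbc)
                have hs1d : IsStable (mkPbar a b c A1 B1 C1 E0) qb
                    ((next ((mkPbar a b c A1 B1 C1 E0 : M → PrefList W) c)).run (mkPbar a b c A1 B1 C1 E0) qb) := hs1
                have hs2d : IsStable (mkPbar a b c A2 B2 C2 E0) qb
                    ((next ((mkPbar a b c A2 B2 C2 E0 : M → PrefList W) c)).run (mkPbar a b c A2 B2 C2 E0) qb) := hs2
                rw [e1] at hs1d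
                rw [e2] at hs2d
                have hneq : next ((mkPbar a b c A1 B1 C1 E0, qb).1 c) ≠ next ((mkPbar a b c A2 B2 C2 E0, qb).1 c) := by
                  show next ((mkPbar a b c A1 B1 C1 E0 : M → PrefList W) c) ≠ next ((mkPbar a b c A2 B2 C2 E0 : M → PrefList W) c)
                  rw [e1, e2]; exact hsp
                have hviol := hOc'.1 rfl (mkPbar a b c A1 B1 C1 E0, qb) hm1 (mkPbar a b c A2 B2 C2 E0, qb) hm2 hneq
                refine hviol ?_
                show outPrefers ((mkPbar a b c A1 B1 C1 E0 : M → PrefList W) c)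
                  (((next ((mkPbar a b c A2 B2 C2 E0 : M → PrefList W) c)).run (mkPbar a b c A2 B2 C2 E0) qb).toFun c)
                  (((next ((mkPbar a b c A1 B1 C1 E0 : M → PrefList W) c)).run (mkPbar a b c A1 B1 C1 E0) qb).toFun c)
                rw [e1, e2]
                have pin_t := (osp_pin4 hab hac hbc hxy hxz hyz (hEf A1 B1 C1) (by rw [hAf]; exact hA1) (by rw [hBf]; exact hB1) (by rw [hCf]; exact hC1) hqx hqz hs1d).2
                have pin_s := (osp_pin3 hab hac hbc hxy hxz hyz (hEf A2 B2 C2) (by rw [hAf]; exact hA2) (by rw [hBf]; exact hB2) (by rw [hCf]; exact hC2) hqx hqy hqz hs2d).2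
                rw [pin_t, pin_s]
                exact show x ∈ C1.val by rw [hC1]; simp
            · -- q is none of a, b, c
              refine ih E0 {r ∈ P | next (r.1 q) = next E0}
                (hOa'.2 E0) (hOb'.2 E0) (hOc'.2 E0) ?_
              intro pa pb pc h1 h2 h3
              obtain ⟨hm, hs⟩ := hfam pa pb pc h1 h2 h3
              have hnext : next ((mkPbar a b c pa pb pc E0 : M → PrefList W) q) = next E0 := by
                rw [mkPbar_other _ _ _ _ hqa hqb hqc]
              refine ⟨⟨hm, hnext⟩, ?_⟩
              have hsd : IsStable (mkPbar a b c pa pb pc E0) qb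
                  ((next ((mkPbar a b c pa pb pc E0 : M → PrefList W) q)).run
                    (mkPbar a b c pa pb pc E0) qb) := hs
              rw [hnext] at hsd
              exact hsd
    | nodeW q next ih =>
        intro P hOa' hOb' hOc' hfam
        refine ih (qb q) {r ∈ P | next (r.2 q) = next (qb q)}
          (hOa' (qb q)) (hOb' (qb q)) (hOc' (qb q)) ?_
        intro pa pb pc h1 h2 h3
        obtain ⟨hm, hs⟩ := hfam pa pb pc h1 h2 h3
        exact ⟨⟨hm, rfl⟩, hs⟩
  exact key I Set.univ hOa hOb hOc
    (fun pa pb pc _ _ _ => ⟨trivial, hstable _ _⟩)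

/-- If `|M| ≥ 3` and `|W| ≥ 3`, then no stable two-sides-querying
matching rule is OSP-implementable for `M` (is implemented by a two-sides-querying
mechanism OSP for every man); moreover, no stable two-sides-querying matching
mechanism is OSP for more than two men. -/
theorem no_stable_two_sided_OSP
    {M W : Type} [Fintype M] [Fintype W]
    (hM : 3 ≤ Fintype.card M) (hW : 3 ≤ Fintype.card W) :
    (∀ C : (M → PrefList W) → (W → PrefList M) → Matching M W,
        (∀ pbar qbar, IsStable pbar qbar (C pbar qbar)) →
        ¬ ∃ I : Mech2 M W, (∀ m : M, I.OSPForM m) ∧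
            ∀ pbar qbar, I.run pbar qbar = C pbar qbar) ∧
      (∀ I : Mech2 M W,
        (∀ pbar qbar, IsStable pbar qbar (I.run pbar qbar)) →
        ¬ ∃ a b c : M, a ≠ b ∧ a ≠ c ∧ b ≠ c ∧
            I.OSPForM a ∧ I.OSPForM b ∧ I.OSPForM c) := by
  classical
  obtain ⟨x, y, z, hxy, hxz, hyz⟩ : ∃ x y z : W, x ≠ y ∧ x ≠ z ∧ y ≠ z := by
    obtain ⟨s, -, hs⟩ := Finset.exists_subset_card_eq (s := (Finset.univ : Finset W)) (n := 3)
      (by simpa using hW)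
    obtain ⟨x, y, z, hxy, hxz, hyz, -⟩ := Finset.card_eq_three.mp hs
    exact ⟨x, y, z, hxy, hxz, hyz⟩
  have part2 : ∀ I : Mech2 M W,
      (∀ pbar qbar, IsStable pbar qbar (I.run pbar qbar)) →
      ¬ ∃ a b c : M, a ≠ b ∧ a ≠ c ∧ b ≠ c ∧
          I.OSPForM a ∧ I.OSPForM b ∧ I.OSPForM c := by
    rintro I hst ⟨a, b, c, hab, hac, hbc, ha, hb, hc⟩
    exact osp_main a b c x y z hab hac hbc hxy hxz hyz I hst ha hb hc
  refine ⟨?_, part2⟩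
  rintro C hC ⟨I, hosp, hrun⟩
  obtain ⟨a, b, c, hab, hac, hbc⟩ : ∃ a b c : M, a ≠ b ∧ a ≠ c ∧ b ≠ c := by
    obtain ⟨s, -, hs⟩ := Finset.exists_subset_card_eq (s := (Finset.univ : Finset M)) (n := 3)
      (by simpa using hM)
    obtain ⟨a, b, c, hab, hac, hbc, -⟩ := Finset.card_eq_three.mp hs
    exact ⟨a, b, c, hab, hac, hbc⟩
  exact part2 I (fun p q => by rw [hrun]; exact hC p q)
    ⟨a, b, c, hab, hac, hbc, hosp a, hosp b, hosp c⟩
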